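/- Let U: (0,X) → ℝ be C¹ with U' < 0, and let μ₁, μ₂ be finite signed measures on (0,X) with μ₁((0,X)) = μ₂((0,X)), with μ₁((0,x]) ≤ μ₂((0,x]) for all x ∈ (0,X), with ∫ U d|μ₁| and ∫ U d|μ₂| finite, and with U(x)·(μ₁-μ₂)((0,x]) → 0 as x → 0⁺ and as x → X⁻. Then ∫ U dμ₁ ≤ ∫ U dμ₂, with strict inequality if μ₁ ≠ μ₂. -/

import Mathlib

open MeasureTheory

/-- The integral of a function against a signed measure, restricted to a set,
via the Jordan decomposition. -/
noncomputable def signedIntegralOn (μ : SignedMeasure ℝ) (S : Set ℝ) (U : ℝ → ℝ) : ℝ :=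
  (∫ x in S, U x ∂μ.toJordanDecomposition.posPart)
    - ∫ x in S, U x ∂μ.toJordanDecomposition.negPart

open Set

lemma sm_apply (μ : SignedMeasure ℝ) {i : Set ℝ} (hi : MeasurableSet i) :
    μ i = (μ.toJordanDecomposition.posPart i).toReal
      - (μ.toJordanDecomposition.negPart i).toReal := by
  conv_lhs => rw [← μ.toSignedMeasure_toJordanDecomposition]
  rw [JordanDecomposition.toSignedMeasure, VectorMeasure.sub_apply,
    Measure.toSignedMeasure_apply_measurable hi, Measure.toSignedMeasure_apply_measurable hi]
  rfl

section S
variable {X : EReal} {S : Set ℝ} (hS : S = {x : ℝ | 0 < x ∧ (x : EReal) < X})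

include hS in
lemma S_open : IsOpen S := by
  have : S = ((↑) : ℝ → EReal) ⁻¹' (Set.Ioo 0 X) := by
    rw [hS]; ext x; simp [Set.mem_Ioo, EReal.coe_pos]
  rw [this]
  exact isOpen_Ioo.preimage continuous_coe_real_ereal

include hS in
lemma S_ord {a b : ℝ} (ha : a ∈ S) (hb : b ∈ S) : Set.uIcc a b ⊆ S := by
  subst hS
  rintro c hc
  rcases hc with ⟨h1, h2⟩
  rw [inf_le_iff] at h1
  rw [le_sup_iff] at h2
  constructor
  · rcases h1 with h | h
    · exact lt_of_lt_of_le ha.1 h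
    · exact lt_of_lt_of_le hb.1 h
  · rcases h2 with h | h
    · exact lt_of_le_of_lt (EReal.coe_le_coe_iff.2 h) ha.2
    · exact lt_of_le_of_lt (EReal.coe_le_coe_iff.2 h) hb.2

lemma ibp (hS : S = {x : ℝ | 0 < x ∧ (x : EReal) < X})
    (U U' : ℝ → ℝ)
    (hU : ∀ x ∈ S, HasDerivAt U (U' x) x)
    (hU'cont : ContinuousOn U' S)
    (hU'nonpos : ∀ x ∈ S, U' x ≤ 0)
    (ρ : Measure ℝ) [IsFiniteMeasure ρ] (hρS : ρ Sᶜ = 0)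
    (hint : Integrable U ρ) {x₀ : ℝ} (hx₀ : x₀ ∈ S) :
    Integrable (fun t => U' t * (if x₀ < t then (ρ (Set.Ici t)).toReal
        else -((ρ (Set.Iio t)).toReal))) (volume.restrict S) ∧
    ∫ x, (U x - U x₀) ∂ρ
      = ∫ t in S, U' t * (if x₀ < t then (ρ (Set.Ici t)).toReal
          else -((ρ (Set.Iio t)).toReal)) := by
  have hSm : MeasurableSet S := (S_open hS).measurableSet
  have haeS : ∀ᵐ x ∂ρ, x ∈ S := by
    rw [ae_iff]
    exact hρS
  set K : ℝ → ℝ → ℝ := fun x t =>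
    (if x₀ < t ∧ t ≤ x then (1:ℝ) else 0) - (if x < t ∧ t ≤ x₀ then (1:ℝ) else 0) with hK
  set g : ℝ → ℝ → ℝ := fun x t => U' t * K x t with hg
  -- representation of g for fixed x
  have hrep : ∀ x, x₀ ≤ x → g x = (Set.Ioc x₀ x).indicator U' := by
    intro x hx
    funext t
    simp only [hg, hK, Set.indicator, Set.mem_Ioc]
    by_cases h : x₀ < t ∧ t ≤ x
    · rw [if_pos h, if_pos h, if_neg (fun h2 => absurd (h2.2.trans hx) (not_le.2 h2.1))]
      ring
    · rw [if_neg h, if_neg h, if_neg (fun h2 => absurd (h2.2.trans hx) (not_le.2 h2.1))]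
      ring
  have hrep' : ∀ x, x < x₀ → g x = fun t => -((Set.Ioc x x₀).indicator U' t) := by
    intro x hx
    funext t
    simp only [hg, hK, Set.indicator, Set.mem_Ioc]
    have hfalse : ¬(x₀ < t ∧ t ≤ x) := fun h2 => absurd ((h2.1.trans_le h2.2).trans hx) (lt_irrefl _)
    rw [if_neg hfalse]
    by_cases h : x < t ∧ t ≤ x₀
    · rw [if_pos h, if_pos h]; ring
    · rw [if_neg h, if_neg h]; ring
  -- FTC
  have ftc : ∀ x ∈ S, ∫ t in x₀..x, U' t = U x - U x₀ := by
    intro x hx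
    exact intervalIntegral.integral_eq_sub_of_hasDerivAt
      (fun t ht => hU t (S_ord hS hx₀ hx ht))
      ((hU'cont.mono (S_ord hS hx₀ hx)).intervalIntegrable)
  have hIocS : ∀ x ∈ S, x₀ ≤ x → Set.Ioc x₀ x ⊆ S := fun x hx h =>
    fun t ht => S_ord hS hx₀ hx (by rw [Set.uIcc_of_le h]; exact Set.Ioc_subset_Icc_self ht)
  have hIocS' : ∀ x ∈ S, x < x₀ → Set.Ioc x x₀ ⊆ S := fun x hx h =>
    fun t ht => S_ord hS hx₀ hx (by rw [Set.uIcc_of_ge h.le]; exact Set.Ioc_subset_Icc_self ht)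
  -- set-integral identities
  have hind : ∀ (a b : ℝ), Set.Ioc a b ⊆ S → ∀ (V : ℝ → ℝ),
      ∫ t, (Set.Ioc a b).indicator V t ∂(volume.restrict S) = ∫ t in Set.Ioc a b, V t := by
    intro a b hab V
    rw [integral_indicator measurableSet_Ioc, Measure.restrict_restrict measurableSet_Ioc,
      Set.inter_eq_self_of_subset_left hab]
  -- step A
  have stepA : ∀ x ∈ S, ∫ t, g x t ∂(volume.restrict S) = U x - U x₀ := by
    intro x hx
    rcases le_or_gt x₀ x with h | h
    · rw [hrep x h, hind _ _ (hIocS x hx h) U', ← intervalIntegral.integral_of_le h, ftc x hx]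
    · rw [hrep' x h]
      rw [integral_neg, hind _ _ (hIocS' x hx h) U', ← intervalIntegral.integral_of_le h.le,
        intervalIntegral.integral_symm x₀ x, ftc x hx]
      ring
  -- measurability of the kernel on the product
  have hKmeas : Measurable (fun p : ℝ × ℝ => K p.1 p.2) := by
    apply Measurable.sub
    · exact Measurable.ite ((measurableSet_lt measurable_const measurable_snd).inter
        (measurableSet_le measurable_snd measurable_fst)) measurable_const measurable_const
    · exact Measurable.ite ((measurableSet_lt measurable_fst measurable_snd).inter
        (measurableSet_le measurable_snd measurable_const)) measurable_const measurable_const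
  have hU'snd : AEMeasurable (fun p : ℝ × ℝ => U' p.2) (ρ.prod (volume.restrict S)) := by
    have h1 : AEMeasurable U' (Measure.map Prod.snd (ρ.prod (volume.restrict S))) := by
      rw [Measure.map_snd_prod]
      exact (hU'cont.aemeasurable hSm).smul_measure _
    exact h1.comp_measurable measurable_snd
  have gmeas : AEStronglyMeasurable (Function.uncurry g) (ρ.prod (volume.restrict S)) := by
    have : Function.uncurry g = fun p : ℝ × ℝ => U' p.2 * K p.1 p.2 := rfl
    rw [this]
    exact (hU'snd.mul hKmeas.aemeasurable).aestronglyMeasurable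
  -- integrability of slices
  have hIocInt : ∀ (a b : ℝ), Set.Icc a b ⊆ S → IntegrableOn U' (Set.Ioc a b) volume :=
    fun a b hab => ((hU'cont.mono hab).integrableOn_Icc).mono_set Set.Ioc_subset_Icc_self
  have hIccS : ∀ x ∈ S, x₀ ≤ x → Set.Icc x₀ x ⊆ S := fun x hx h =>
    (Set.uIcc_of_le h) ▸ S_ord hS hx₀ hx
  have hIccS' : ∀ x ∈ S, x < x₀ → Set.Icc x x₀ ⊆ S := fun x hx h =>
    (Set.uIcc_of_ge h.le) ▸ S_ord hS hx₀ hx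
  have hindInt : ∀ (a b : ℝ), Set.Ioc a b ⊆ S → Set.Icc a b ⊆ S →
      Integrable ((Set.Ioc a b).indicator U') (volume.restrict S) := by
    intro a b hab hab2
    rw [integrable_indicator_iff measurableSet_Ioc]
    unfold IntegrableOn
    rw [Measure.restrict_restrict measurableSet_Ioc, Set.inter_eq_self_of_subset_left hab]
    exact hIocInt a b hab2
  have hsliceInt : ∀ x ∈ S, Integrable (g x) (volume.restrict S) := by
    intro x hx
    rcases le_or_gt x₀ x with h | h
    · rw [hrep x h]
      exact hindInt _ _ (hIocS x hx h) (hIccS x hx h)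
    · rw [hrep' x h]
      exact (hindInt _ _ (hIocS' x hx h) (hIccS' x hx h)).neg
  -- norm integral equals |U x - U x₀|
  have hnorm : ∀ x ∈ S, ∫ t, ‖g x t‖ ∂(volume.restrict S) = |U x - U x₀| := by
    intro x hx
    have key : ∀ (a b : ℝ), Set.Ioc a b ⊆ S →
        ∫ t, ‖(Set.Ioc a b).indicator U' t‖ ∂(volume.restrict S) = -∫ t in Set.Ioc a b, U' t := by
      intro a b hab
      have h1 : ∀ t, ‖(Set.Ioc a b).indicator U' t‖ = (Set.Ioc a b).indicator (fun s => ‖U' s‖) t :=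
        fun t => norm_indicator_eq_indicator_norm U' t
      rw [integral_congr_ae (Filter.Eventually.of_forall h1), hind a b hab,
        ← integral_neg]
      refine setIntegral_congr_fun measurableSet_Ioc (fun t ht => ?_)
      rw [Real.norm_eq_abs, abs_of_nonpos (hU'nonpos t (hab ht))]
    rcases le_or_gt x₀ x with h | h
    · have hUle : U x ≤ U x₀ := by
        have := ftc x hx
        rw [intervalIntegral.integral_of_le h] at this
        have hnp : ∫ t in Set.Ioc x₀ x, U' t ≤ 0 :=
          setIntegral_nonpos measurableSet_Ioc (fun t ht => hU'nonpos t (hIocS x hx h ht))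
        linarith
      rw [hrep x h, key _ _ (hIocS x hx h), ← intervalIntegral.integral_of_le h, ftc x hx,
        abs_of_nonpos (by linarith)]
    · have hUge : U x₀ ≤ U x := by
        have hftc := ftc x hx
        rw [intervalIntegral.integral_symm, intervalIntegral.integral_of_le h.le] at hftc
        have hnp : ∫ t in Set.Ioc x x₀, U' t ≤ 0 :=
          setIntegral_nonpos measurableSet_Ioc (fun t ht => hU'nonpos t (hIocS' x hx h ht))
        linarith
      have h1 : ∀ t, ‖g x t‖ = ‖(Set.Ioc x x₀).indicator U' t‖ := by
        intro t
        rw [hrep' x h]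
        exact norm_neg _
      rw [integral_congr_ae (Filter.Eventually.of_forall h1), key _ _ (hIocS' x hx h)]
      have hftc := ftc x hx
      rw [intervalIntegral.integral_symm, intervalIntegral.integral_of_le h.le] at hftc
      rw [abs_of_nonneg (by linarith)]
      linarith
  -- product integrability
  have hprodInt : Integrable (Function.uncurry g) (ρ.prod (volume.restrict S)) := by
    rw [integrable_prod_iff gmeas]
    constructor
    · exact haeS.mono fun x hx => hsliceInt x hx
    · refine ((hint.sub (integrable_const (U x₀))).abs).congr ?_
      exact haeS.mono fun x hx => (hnorm x hx).symm
  -- inner integral in t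
  have hinner : ∀ t, ∫ x, g x t ∂ρ
      = U' t * (if x₀ < t then (ρ (Set.Ici t)).toReal else -((ρ (Set.Iio t)).toReal)) := by
    intro t
    rw [show (fun x => g x t) = fun x => U' t * K x t from rfl, integral_const_mul]
    congr 1
    by_cases h : x₀ < t
    · rw [if_pos h]
      have hKt : (fun x => K x t) = (Set.Ici t).indicator (fun _ => (1:ℝ)) := by
        funext x
        simp only [hK, Set.indicator, Set.mem_Ici]
        by_cases h2 : t ≤ x
        · rw [if_pos ⟨h, h2⟩, if_pos h2, if_neg (fun hc => absurd hc.1 (not_lt.2 h2))]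
          ring
        · rw [if_neg (fun hc => h2 hc.2), if_neg h2,
            if_neg (fun hc => absurd hc.2 (not_le.2 h))]
          ring
      rw [hKt, integral_indicator_const (1:ℝ) measurableSet_Ici]
      simp [Measure.real]
    · rw [if_neg h]
      have hKt : (fun x => K x t) = fun x => -((Set.Iio t).indicator (fun _ => (1:ℝ)) x) := by
        funext x
        simp only [hK, Set.indicator, Set.mem_Iio]
        rw [if_neg (fun hc : x₀ < t ∧ t ≤ x => h hc.1)]
        by_cases h2 : x < t
        · rw [if_pos ⟨h2, not_lt.1 h⟩, if_pos h2]
          ring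
        · rw [if_neg (fun hc => h2 hc.1), if_neg h2]
          ring
      rw [hKt, integral_neg, integral_indicator_const (1:ℝ) measurableSet_Iio]
      simp [Measure.real]
  have swap := integral_integral_swap hprodInt
  constructor
  · exact hprodInt.integral_prod_right.congr
      (Filter.Eventually.of_forall fun t => hinner t)
  · calc ∫ x, (U x - U x₀) ∂ρ
        = ∫ x, ∫ t, g x t ∂(volume.restrict S) ∂ρ :=
          integral_congr_ae (haeS.mono fun x hx => (stepA x hx).symm)
      _ = ∫ t in S, ∫ x, g x t ∂ρ := swap
      _ = _ := integral_congr_ae (Filter.Eventually.of_forall fun t => hinner t)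

include hS in
lemma S_nonempty (hX : 0 < X) : S.Nonempty := by
  subst hS
  rcases eq_or_ne X ⊤ with rfl | hXt
  · exact ⟨1, by norm_num⟩
  · lift X to ℝ using ⟨hXt, (lt_trans (by norm_num : (⊥:EReal) < 0) hX).ne'⟩
    have h0 : (0:ℝ) < X := EReal.coe_lt_coe_iff.1 (by exact_mod_cast hX)
    exact ⟨X/2, by positivity, by exact_mod_cast EReal.coe_lt_coe_iff.2 (by linarith)⟩

lemma Iio_le_of_Iic_le {A B : Measure ℝ} {t : ℝ} (ht : 0 < t)
    (h : ∀ s, 0 < s → s < t → A (Set.Iic s) ≤ B (Set.Iic s)) :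
    A (Set.Iio t) ≤ B (Set.Iio t) := by
  set u : ℕ → ℝ := fun n => t - t / (n + 2) with hu
  have humem : ∀ n, 0 < u n ∧ u n < t := by
    intro n
    have h2 : (0:ℝ) < (n:ℝ) + 2 := by positivity
    constructor
    · have : t / ((n:ℝ) + 2) < t := by
        rw [div_lt_iff₀ h2]
        nlinarith
      simpa [hu] using sub_pos.2 this
    · have : 0 < t / ((n:ℝ) + 2) := by positivity
      simpa [hu] using sub_lt_self t this
  have hmono : Monotone u := by
    intro m n hmn
    have h2 : (0:ℝ) < (m:ℝ) + 2 := by positivity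
    have h3 : (0:ℝ) < (n:ℝ) + 2 := by positivity
    have hmn' : (m:ℝ) ≤ (n:ℝ) := Nat.cast_le.2 hmn
    have : t / ((n:ℝ) + 2) ≤ t / ((m:ℝ) + 2) :=
      div_le_div_of_nonneg_left ht.le h2 (by linarith)
    simp only [hu]
    linarith
  have hunion : Set.Iio t = ⋃ n, Set.Iic (u n) := by
    ext x
    simp only [Set.mem_Iio, Set.mem_iUnion, Set.mem_Iic]
    constructor
    · intro hx
      obtain ⟨n, hn⟩ := exists_nat_gt (t / (t - x))
      refine ⟨n, ?_⟩
      have htx : 0 < t - x := sub_pos.2 hx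
      have : t / ((n:ℝ) + 2) < t - x := by
        rw [div_lt_iff₀ (by positivity)]
        rw [div_lt_iff₀ htx] at hn
        nlinarith
      simp only [hu]
      linarith
    · rintro ⟨n, hn⟩
      exact lt_of_le_of_lt hn (humem n).2
  have hmono' : Monotone fun n => Set.Iic (u n) := fun m n hmn => Set.Iic_subset_Iic.2 (hmono hmn)
  have hA := tendsto_measure_iUnion_atTop (μ := A) hmono'
  have hB := tendsto_measure_iUnion_atTop (μ := B) hmono'
  rw [hunion]
  exact le_of_tendsto_of_tendsto' hA hB fun n => h (u n) (humem n).1 (humem n).2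

lemma core (hS : S = {x : ℝ | 0 < x ∧ (x : EReal) < X}) (hX : 0 < X)
    (U U' : ℝ → ℝ)
    (hU : ∀ x ∈ S, HasDerivAt U (U' x) x)
    (hU'cont : ContinuousOn U' S)
    (hU'neg : ∀ x ∈ S, U' x < 0)
    (A B : Measure ℝ) [IsFiniteMeasure A] [IsFiniteMeasure B]
    (hAS : A Sᶜ = 0) (hBS : B Sᶜ = 0)
    (htot : A Set.univ = B Set.univ)
    (hcum : ∀ x ∈ S, A (Set.Iic x) ≤ B (Set.Iic x))
    (hintA : Integrable U A) (hintB : Integrable U B) :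
    ∫ x, U x ∂A ≤ ∫ x, U x ∂B ∧
      (∀ x₁ ∈ S, A (Set.Iic x₁) < B (Set.Iic x₁) → ∫ x, U x ∂A < ∫ x, U x ∂B) := by
  have hSm : MeasurableSet S := (S_open hS).measurableSet
  obtain ⟨x₀, hx₀⟩ := S_nonempty hS hX
  have hU'nonpos : ∀ x ∈ S, U' x ≤ 0 := fun x hx => (hU'neg x hx).le
  obtain ⟨hintkA, heqA⟩ := ibp hS U U' hU hU'cont hU'nonpos A hAS hintA hx₀
  obtain ⟨hintkB, heqB⟩ := ibp hS U U' hU hU'cont hU'nonpos B hBS hintB hx₀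
  set f : ℝ → ℝ := fun t =>
    U' t * ((A (Set.Iio t)).toReal - (B (Set.Iio t)).toReal) with hf
  -- pointwise identity for the difference of kernels
  have hker : ∀ t,
      U' t * (if x₀ < t then (B (Set.Ici t)).toReal else -((B (Set.Iio t)).toReal))
        - U' t * (if x₀ < t then (A (Set.Ici t)).toReal else -((A (Set.Iio t)).toReal))
      = f t := by
    intro t
    have hci : ∀ (ρ : Measure ℝ) [IsFiniteMeasure ρ],
        (ρ (Set.Ici t)).toReal = (ρ Set.univ).toReal - (ρ (Set.Iio t)).toReal := by
      intro ρ _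
      rw [← Set.compl_Iio, measure_compl measurableSet_Iio (measure_ne_top _ _),
        ENNReal.toReal_sub_of_le (measure_mono (Set.subset_univ _)) (measure_ne_top _ _)]
    by_cases h : x₀ < t
    · rw [if_pos h, if_pos h, hci A, hci B, htot, hf]
      ring
    · rw [if_neg h, if_neg h, hf]
      ring
  have hdiff : ∫ x, U x ∂B - ∫ x, U x ∂A = ∫ t in S, f t := by
    have hA' : ∫ x, (U x - U x₀) ∂A = ∫ x, U x ∂A - (A Set.univ).toReal * U x₀ := by
      rw [integral_sub hintA (integrable_const _), integral_const]
      simp [mul_comm, Measure.real]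
    have hB' : ∫ x, (U x - U x₀) ∂B = ∫ x, U x ∂B - (B Set.univ).toReal * U x₀ := by
      rw [integral_sub hintB (integrable_const _), integral_const]
      simp [mul_comm, Measure.real]
    have h1 : ∫ x, U x ∂B - ∫ x, U x ∂A
        = ∫ x, (U x - U x₀) ∂B - ∫ x, (U x - U x₀) ∂A := by
      rw [hA', hB', htot]; ring
    rw [h1, heqA, heqB, ← integral_sub hintkB hintkA]
    exact integral_congr_ae (Filter.Eventually.of_forall fun t => hker t)
  have hf_int : Integrable f (volume.restrict S) :=
    (hintkB.sub hintkA).congr (Filter.Eventually.of_forall fun t => hker t)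
  have hIio : ∀ t ∈ S, A (Set.Iio t) ≤ B (Set.Iio t) := by
    intro t ht
    refine Iio_le_of_Iic_le (hS ▸ ht).1 fun s hs hst => hcum s ?_
    rw [hS]
    exact ⟨hs, lt_trans (EReal.coe_lt_coe_iff.2 hst) (hS ▸ ht).2⟩
  have hfnonneg : ∀ t ∈ S, 0 ≤ f t := by
    intro t ht
    have h1 : (A (Set.Iio t)).toReal - (B (Set.Iio t)).toReal ≤ 0 := by
      have := ENNReal.toReal_le_toReal (measure_ne_top A _) (measure_ne_top B _) |>.2 (hIio t ht)
      linarith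
    simp only [hf]
    nlinarith [mul_nonneg (neg_nonneg.2 (hU'nonpos t ht)) (neg_nonneg.2 h1)]
  have hmain : 0 ≤ ∫ t in S, f t :=
    setIntegral_nonneg hSm hfnonneg
  constructor
  · linarith [hdiff, hmain]
  · intro x₁ hx₁ hlt
    -- find s₀ ∈ S with x₁ < s₀ and A (Iio s₀) < B (Iic x₁)
    obtain ⟨r, hr, hball⟩ := Metric.isOpen_iff.1 (S_open hS) x₁ hx₁
    have hIccr : Set.Icc x₁ (x₁ + r/2) ⊆ S := by
      intro y hy
      apply hball
      rw [Metric.mem_ball, Real.dist_eq, abs_of_nonneg (by linarith [hy.1])]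
      have := hy.2
      linarith
    set v : ℕ → ℝ := fun n => x₁ + (r/2) / (n + 1) with hv
    have hvmem : ∀ n, v n ∈ Set.Icc x₁ (x₁ + r/2) := by
      intro n
      have h1 : (0:ℝ) < (n:ℝ) + 1 := by positivity
      constructor
      · simp only [hv]; nlinarith [div_nonneg (by linarith : (0:ℝ) ≤ r/2) h1.le]
      · simp only [hv]
        have : (r/2) / ((n:ℝ) + 1) ≤ r/2 := by
          rw [div_le_iff₀ h1]; nlinarith
        linarith
    have hanti : Antitone fun n => Set.Iic (v n) := by
      intro m n hmn
      apply Set.Iic_subset_Iic.2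
      simp only [hv]
      have h2 : (0:ℝ) < (m:ℝ) + 1 := by positivity
      have hmn' : (m:ℝ) ≤ (n:ℝ) := Nat.cast_le.2 hmn
      have : (r/2) / ((n:ℝ)+1) ≤ (r/2) / ((m:ℝ)+1) :=
        div_le_div_of_nonneg_left (by linarith) h2 (by linarith)
      linarith
    have hinter : ⋂ n, Set.Iic (v n) = Set.Iic x₁ := by
      ext y
      simp only [Set.mem_iInter, Set.mem_Iic]
      constructor
      · intro h
        by_contra hy
        push_neg at hy
        obtain ⟨n, hn⟩ := exists_nat_gt ((r/2) / (y - x₁))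
        have hyx : 0 < y - x₁ := by linarith
        have : (r/2) / ((n:ℝ) + 1) < y - x₁ := by
          rw [div_lt_iff₀ (by positivity)]
          rw [div_lt_iff₀ hyx] at hn
          nlinarith
        have := h n
        simp only [hv] at this
        linarith
      · intro h n
        have := (hvmem n).1
        linarith
    have htendA : Filter.Tendsto (fun n => A (Set.Iic (v n))) Filter.atTop
        (nhds (A (Set.Iic x₁))) := by
      have := tendsto_measure_iInter_atTop (μ := A)
        (fun n => (measurableSet_Iic).nullMeasurableSet) hanti ⟨0, measure_ne_top _ _⟩
      rwa [hinter] at this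
    have hev : ∀ᶠ n in Filter.atTop, A (Set.Iic (v n)) < B (Set.Iic x₁) :=
      htendA.eventually_lt_const hlt
    obtain ⟨n, hn⟩ := hev.exists
    obtain ⟨s₀, hs₀S, hx₁s₀, hs₀le, hn⟩ :
        ∃ s₀, s₀ ∈ S ∧ x₁ < s₀ ∧ s₀ ≤ x₁ + r/2 ∧ A (Set.Iic s₀) < B (Set.Iic x₁) := by
      refine ⟨v n, hIccr (hvmem n), ?_, (hvmem n).2, hn⟩
      have h1 : (0:ℝ) < (r/2) / ((n:ℝ)+1) := by positivity
      simp only [hv]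
      linarith
    obtain ⟨a, b, hab, hax₁, hbs₀⟩ : ∃ a b : ℝ, a < b ∧ x₁ < a ∧ b = s₀ :=
      ⟨(x₁ + s₀)/2, s₀, by linarith, by linarith, rfl⟩
    have hIccab : Set.Icc a b ⊆ S := by
      intro y hy
      apply hIccr
      refine ⟨by linarith [hy.1], ?_⟩
      have h2 : s₀ ≤ x₁ + r/2 := hs₀le
      have := hy.2
      rw [hbs₀] at this
      linarith
    have hεpos : 0 < (B (Set.Iic x₁)).toReal - (A (Set.Iic s₀)).toReal := by
      have := ENNReal.toReal_lt_toReal (measure_ne_top A _) (measure_ne_top B _) |>.2 hn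
      linarith
    set ε := (B (Set.Iic x₁)).toReal - (A (Set.Iic s₀)).toReal with hε
    have hDlow : ∀ t ∈ Set.Icc a b, ε ≤ (B (Set.Iio t)).toReal - (A (Set.Iio t)).toReal := by
      intro t ht
      have h1 : Set.Iic x₁ ⊆ Set.Iio t := fun y hy =>
        lt_of_le_of_lt hy (lt_of_lt_of_le hax₁ ht.1)
      have h2 : Set.Iio t ⊆ Set.Iic s₀ := fun y hy =>
        le_trans (le_of_lt hy) (hbs₀ ▸ ht.2)
      have hb1 : (B (Set.Iic x₁)).toReal ≤ (B (Set.Iio t)).toReal :=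
        ENNReal.toReal_le_toReal (measure_ne_top _ _) (measure_ne_top _ _) |>.2 (measure_mono h1)
      have ha1 : (A (Set.Iio t)).toReal ≤ (A (Set.Iic s₀)).toReal :=
        ENNReal.toReal_le_toReal (measure_ne_top _ _) (measure_ne_top _ _) |>.2 (measure_mono h2)
      rw [hε]
      linarith
    obtain ⟨tm, htm, htmin⟩ := isCompact_Icc.exists_isMinOn (Set.nonempty_Icc.2 hab.le)
      ((hU'cont.mono hIccab).neg)
    have hcpos : 0 < -U' tm := by linarith [hU'neg tm (hIccab htm)]
    set c := -U' tm with hc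
    have hflow : ∀ t ∈ Set.Icc a b, c * ε ≤ f t := by
      intro t ht
      have h1 : c ≤ -U' t := htmin ht
      have h2 := hDlow t ht
      have h3 : 0 ≤ -U' t := by linarith [hU'nonpos t (hIccab ht)]
      have h4 : f t = (-U' t) * ((B (Set.Iio t)).toReal - (A (Set.Iio t)).toReal) := by
        simp only [hf]; ring
      rw [h4]
      exact mul_le_mul h1 h2 hεpos.le h3
    have hint_ab : IntegrableOn f (Set.Icc a b) volume := by
      have h0 : IntegrableOn f S volume := hf_int
      exact h0.mono_set hIccab
    have h4 : (b - a) * (c * ε) ≤ ∫ t in Set.Icc a b, f t := by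
      have := setIntegral_mono_on (integrableOn_const measure_Icc_lt_top.ne)
        hint_ab measurableSet_Icc hflow
      rwa [setIntegral_const, Measure.real, Real.volume_Icc, ENNReal.toReal_ofReal (by linarith), smul_eq_mul]
        at this
    have h5 : ∫ t in Set.Icc a b, f t ≤ ∫ t in S, f t := by
      refine setIntegral_mono_set hf_int ?_ (HasSubset.Subset.eventuallyLE hIccab)
      exact (ae_restrict_mem hSm).mono hfnonneg
    have h6 : 0 < (b - a) * (c * ε) := mul_pos (by linarith) (mul_pos hcpos hεpos)
    linarith [hdiff]
end S

set_option maxHeartbeats 1000000 in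
/-- Comparison principle for a strictly decreasing C¹ weight `U` on `(0,X)`
(`X ∈ (0,∞]`): if signed measures `μ₁, μ₂` on `(0,X)` have equal total mass,
`μ₁((0,x]) ≤ μ₂((0,x])` for all `x ∈ (0,X)`, `U` is integrable against `|μ₁|`,`|μ₂|`,
and `U(x)·(μ₁-μ₂)((0,x]) → 0` at both endpoints, then `∫ U dμ₁ ≤ ∫ U dμ₂`,
strictly if `μ₁ ≠ μ₂` on `(0,X)`. -/
theorem decreasing_weight_comparison
    (X : EReal) (hX : 0 < X)
    (S : Set ℝ) (hS : S = {x : ℝ | 0 < x ∧ (x : EReal) < X})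
    (U U' : ℝ → ℝ)
    (hU : ∀ x ∈ S, HasDerivAt U (U' x) x)
    (hU'cont : ContinuousOn U' S)
    (hU'neg : ∀ x ∈ S, U' x < 0)
    (μ₁ μ₂ : SignedMeasure ℝ)
    (hsupp₁ : ∀ A : Set ℝ, MeasurableSet A → A ⊆ Sᶜ → μ₁ A = 0)
    (hsupp₂ : ∀ A : Set ℝ, MeasurableSet A → A ⊆ Sᶜ → μ₂ A = 0)
    (htot : μ₁ S = μ₂ S)
    (hcum : ∀ x ∈ S, μ₁ (Set.Ioc 0 x) ≤ μ₂ (Set.Ioc 0 x))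
    (hint₁ : IntegrableOn U S μ₁.totalVariation)
    (hint₂ : IntegrableOn U S μ₂.totalVariation)
    (hlim0 : Filter.Tendsto (fun x : ℝ => U x * (μ₁ (Set.Ioc 0 x) - μ₂ (Set.Ioc 0 x)))
      (nhdsWithin 0 (Set.Ioi 0)) (nhds 0))
    (hlimX : Filter.Tendsto (fun x : ℝ => U x * (μ₁ (Set.Ioc 0 x) - μ₂ (Set.Ioc 0 x)))
      (Filter.comap (fun x : ℝ => (x : EReal)) (nhdsWithin X (Set.Iio X))) (nhds 0)) :
    signedIntegralOn μ₁ S U ≤ signedIntegralOn μ₂ S U ∧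
    ((∃ A : Set ℝ, MeasurableSet A ∧ A ⊆ S ∧ μ₁ A ≠ μ₂ A) →
      signedIntegralOn μ₁ S U < signedIntegralOn μ₂ S U) := by
  have hSm : MeasurableSet S := (S_open hS).measurableSet
  set p₁ := μ₁.toJordanDecomposition.posPart with hp₁
  set n₁ := μ₁.toJordanDecomposition.negPart with hn₁
  set p₂ := μ₂.toJordanDecomposition.posPart with hp₂
  set n₂ := μ₂.toJordanDecomposition.negPart with hn₂
  set A : Measure ℝ := (p₁ + n₂).restrict S with hA
  set B : Measure ℝ := (p₂ + n₁).restrict S with hB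
  have hfin : ∀ (ρ : Measure ℝ) [IsFiniteMeasure ρ] (E : Set ℝ), ρ E ≠ ⊤ :=
    fun ρ _ E => measure_ne_top ρ E
  have hAS : A Sᶜ = 0 := by
    rw [hA, Measure.restrict_apply hSm.compl]
    simp
  have hBS : B Sᶜ = 0 := by
    rw [hB, Measure.restrict_apply hSm.compl]
    simp
  -- total mass
  have htotR : (p₁ S).toReal - (n₁ S).toReal = (p₂ S).toReal - (n₂ S).toReal := by
    have h1 := sm_apply μ₁ hSm
    have h2 := sm_apply μ₂ hSm
    rw [h1, h2] at htot
    exact htot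
  have htot' : A Set.univ = B Set.univ := by
    rw [hA, hB, Measure.restrict_apply_univ, Measure.restrict_apply_univ,
      Measure.add_apply, Measure.add_apply]
    rw [← ENNReal.toReal_eq_toReal_iff' (by finiteness) (by finiteness)]
    rw [ENNReal.toReal_add (by finiteness) (by finiteness),
      ENNReal.toReal_add (by finiteness) (by finiteness)]
    linarith
  -- cumulative comparison
  have hIicS : ∀ x ∈ S, Set.Iic x ∩ S = Set.Ioc 0 x := by
    intro x hx
    ext y
    simp only [Set.mem_inter_iff, Set.mem_Iic, Set.mem_Ioc, hS, Set.mem_setOf_eq]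
    constructor
    · rintro ⟨h1, h2, h3⟩
      exact ⟨h2, h1⟩
    · rintro ⟨h1, h2⟩
      exact ⟨h2, h1, lt_of_le_of_lt (EReal.coe_le_coe_iff.2 h2) ((hS ▸ hx).2)⟩
  have hcum' : ∀ x ∈ S, A (Set.Iic x) ≤ B (Set.Iic x) := by
    intro x hx
    rw [hA, hB, Measure.restrict_apply measurableSet_Iic,
      Measure.restrict_apply measurableSet_Iic, hIicS x hx,
      Measure.add_apply, Measure.add_apply]
    have h1 := hcum x hx
    rw [sm_apply μ₁ measurableSet_Ioc, sm_apply μ₂ measurableSet_Ioc] at h1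
    rw [← ENNReal.toReal_le_toReal (by finiteness) (by finiteness)]
    rw [ENNReal.toReal_add (by finiteness) (by finiteness),
      ENNReal.toReal_add (by finiteness) (by finiteness)]
    linarith
  -- integrability
  have hTV1 : μ₁.totalVariation = p₁ + n₁ := rfl
  have hTV2 : μ₂.totalVariation = p₂ + n₂ := rfl
  have hint₁' : IntegrableOn U S (p₁ + n₁) := hTV1 ▸ hint₁
  have hint₂' : IntegrableOn U S (p₂ + n₂) := hTV2 ▸ hint₂
  have hi1p : Integrable U (p₁.restrict S) :=
    (hint₁'.mono_measure (Measure.le_add_right le_rfl) : IntegrableOn U S p₁)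
  have hi1n : Integrable U (n₁.restrict S) :=
    (hint₁'.mono_measure (Measure.le_add_left le_rfl) : IntegrableOn U S n₁)
  have hi2p : Integrable U (p₂.restrict S) :=
    (hint₂'.mono_measure (Measure.le_add_right le_rfl) : IntegrableOn U S p₂)
  have hi2n : Integrable U (n₂.restrict S) :=
    (hint₂'.mono_measure (Measure.le_add_left le_rfl) : IntegrableOn U S n₂)
  have hArw : A = p₁.restrict S + n₂.restrict S := by
    rw [hA, Measure.restrict_add]
  have hBrw : B = p₂.restrict S + n₁.restrict S := by
    rw [hB, Measure.restrict_add]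
  have hintA : Integrable U A := by
    rw [hArw]; exact hi1p.add_measure hi2n
  have hintB : Integrable U B := by
    rw [hBrw]; exact hi2p.add_measure hi1n
  obtain ⟨hle, hstrict⟩ := core hS hX U U' hU hU'cont hU'neg A B hAS hBS htot' hcum' hintA hintB
  have hIA : ∫ x, U x ∂A = (∫ x in S, U x ∂p₁) + ∫ x in S, U x ∂n₂ := by
    rw [hArw, integral_add_measure hi1p hi2n]
  have hIB : ∫ x, U x ∂B = (∫ x in S, U x ∂p₂) + ∫ x in S, U x ∂n₁ := by
    rw [hBrw, integral_add_measure hi2p hi1n]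
  have hsig : signedIntegralOn μ₁ S U = (∫ x in S, U x ∂p₁) - ∫ x in S, U x ∂n₁ := by
    simp only [signedIntegralOn, hp₁, hn₁]
  have hsig2 : signedIntegralOn μ₂ S U = (∫ x in S, U x ∂p₂) - ∫ x in S, U x ∂n₂ := by
    simp only [signedIntegralOn, hp₂, hn₂]
  constructor
  · rw [hIA, hIB] at hle
    rw [hsig, hsig2]
    linarith
  · rintro ⟨A₀, hA₀m, hA₀S, hne⟩
    -- find a strict cumulative inequality
    by_cases hstrictcum : ∃ x₁ ∈ S, A (Set.Iic x₁) < B (Set.Iic x₁)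
    · obtain ⟨x₁, hx₁, hx₁lt⟩ := hstrictcum
      have := hstrict x₁ hx₁ hx₁lt
      rw [hIA, hIB] at this
      rw [hsig, hsig2]
      linarith
    · exfalso
      push_neg at hstrictcum
      have heq : ∀ x ∈ S, A (Set.Iic x) = B (Set.Iic x) :=
        fun x hx => le_antisymm (hcum' x hx) (hstrictcum x hx)
      have hABeq : A = B := by
        apply Measure.ext_of_Iic
        intro a
        rcases le_or_gt a 0 with h0 | h0
        · have hempty : Set.Iic a ∩ S = ∅ := by
            ext y
            simp only [Set.mem_inter_iff, Set.mem_Iic, hS, Set.mem_setOf_eq, Set.mem_empty_iff_false,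
              iff_false, not_and]
            intro h1 h2
            linarith
          rw [hA, hB, Measure.restrict_apply measurableSet_Iic,
            Measure.restrict_apply measurableSet_Iic, hempty]
          simp
        · by_cases haS : a ∈ S
          · exact heq a haS
          · have hXa : X ≤ (a : EReal) := by
              by_contra hc
              push_neg at hc
              exact haS (hS ▸ ⟨h0, hc⟩)
            have hsub : Set.Iic a ∩ S = S := by
              apply Set.inter_eq_self_of_subset_right
              intro y hy
              have := (hS ▸ hy).2
              have : (y : EReal) < (a : EReal) := lt_of_lt_of_le this hXa
              exact le_of_lt (EReal.coe_lt_coe_iff.1 this)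
            have h1 : A (Set.Iic a) = A Set.univ := by
              rw [hA, Measure.restrict_apply measurableSet_Iic, Measure.restrict_apply_univ, hsub]
            have h2 : B (Set.Iic a) = B Set.univ := by
              rw [hB, Measure.restrict_apply measurableSet_Iic, Measure.restrict_apply_univ, hsub]
            rw [h1, h2, htot']
      -- evaluate at A₀
      have hA₀int : A₀ ∩ S = A₀ := Set.inter_eq_self_of_subset_left hA₀S
      have hval : p₁ A₀ + n₂ A₀ = p₂ A₀ + n₁ A₀ := by
        have := congrFun (congrArg (fun m => m.toOuterMeasure) hABeq) A₀
        have h2 : A A₀ = B A₀ := by rw [hABeq]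
        rw [hA, hB, Measure.restrict_apply hA₀m, Measure.restrict_apply hA₀m, hA₀int,
          Measure.add_apply, Measure.add_apply] at h2
        exact h2
      apply hne
      rw [sm_apply μ₁ hA₀m, sm_apply μ₂ hA₀m]
      rw [← ENNReal.toReal_eq_toReal_iff' (by finiteness) (by finiteness)] at hval
      rw [ENNReal.toReal_add (by finiteness) (by finiteness),
        ENNReal.toReal_add (by finiteness) (by finiteness)] at hval
      linarith
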